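/- Let f : [0,1] → [0,1] be continuous and let I ⊂ [0,1] be a closed interval such that f^n maps I homeomorphically into I for some n ≥ 1 (i.e., f^n restricted to I is injective, continuous, and f^n(I) ⊆ I). Then for every x ∈ I, the omega-limit set ω(x) of x under f is a periodic orbit of f. -/

import Mathlib

open Set Filter Topology

/-- The omega-limit set of `x` under `f`: accumulation points of the forward orbit. -/
def omegaLimitPt (f : ℝ → ℝ) (x : ℝ) : Set ℝ :=
  {y | ∃ φ : ℕ → ℕ, StrictMono φ ∧ Tendsto (fun k => f^[φ k] x) atTop (nhds y)}

/-- `S` is a periodic orbit of `f`. -/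
def IsPeriodicOrbitSet (f : ℝ → ℝ) (S : Set ℝ) : Prop :=
  ∃ (p : ℝ) (m : ℕ), 0 < m ∧ f^[m] p = p ∧ S = {y | ∃ i : ℕ, y = f^[i] p}

/-- A continuous strictly monotone self-map of `[a,b]`: every orbit converges to a
fixed point. -/
lemma orbit_tendsto_fixedPoint {g : ℝ → ℝ} {a b : ℝ}
    (hg : ContinuousOn g (Icc a b)) (hmono : StrictMonoOn g (Icc a b))
    (hmap : MapsTo g (Icc a b) (Icc a b)) {x : ℝ} (hx : x ∈ Icc a b) :
    ∃ p ∈ Icc a b, g p = p ∧ Tendsto (fun k => g^[k] x) atTop (nhds p) := by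
  have hmem : ∀ k, g^[k] x ∈ Icc a b := fun k => hmap.iterate k hx
  have key : ∀ p : ℝ, Tendsto (fun k => g^[k] x) atTop (nhds p) →
      ∃ q ∈ Icc a b, g q = q ∧ Tendsto (fun k => g^[k] x) atTop (nhds q) := by
    intro p htend
    have hp : p ∈ Icc a b := isClosed_Icc.mem_of_tendsto htend (.of_forall hmem)
    refine ⟨p, hp, ?_, htend⟩
    have h1 : Tendsto (fun k => g (g^[k] x)) atTop (nhds (g p)) := by
      refine (hg.continuousWithinAt hp).tendsto.comp ?_
      exact tendsto_nhdsWithin_of_tendsto_nhds_of_eventually_within _ htend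
        (.of_forall hmem)
    have h2 : Tendsto (fun k => g (g^[k] x)) atTop (nhds p) := by
      refine (htend.comp (tendsto_add_atTop_nat 1)).congr fun k => ?_
      simp only [Function.comp_apply]
      exact Function.iterate_succ_apply' g k x
    exact tendsto_nhds_unique h1 h2
  rcases le_total x (g x) with hle | hle
  · -- increasing orbit
    have mono : Monotone (fun k => g^[k] x) := by
      refine monotone_nat_of_le_succ ?_
      intro k
      induction k with
      | zero => simpa using hle
      | succ k ih =>
        have ih' : g^[k] x ≤ g (g^[k] x) := by
          rwa [Function.iterate_succ_apply'] at ih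
        rw [Function.iterate_succ_apply' g (k + 1), Function.iterate_succ_apply' g k]
        exact hmono.monotoneOn (hmem k) (hmap (hmem k)) ih'
    have hbdd : BddAbove (range fun k => g^[k] x) :=
      ⟨b, by rintro _ ⟨k, rfl⟩; exact (hmem k).2⟩
    exact key _ (tendsto_atTop_ciSup mono hbdd)
  · -- decreasing orbit
    have anti : Antitone (fun k => g^[k] x) := by
      refine antitone_nat_of_succ_le ?_
      intro k
      induction k with
      | zero => simpa using hle
      | succ k ih =>
        have ih' : g (g^[k] x) ≤ g^[k] x := by
          rwa [Function.iterate_succ_apply'] at ih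
        rw [Function.iterate_succ_apply' g (k + 1), Function.iterate_succ_apply' g k]
        exact hmono.monotoneOn (hmap (hmem k)) (hmem k) ih'
    have hbdd : BddBelow (range fun k => g^[k] x) :=
      ⟨a, by rintro _ ⟨k, rfl⟩; exact (hmem k).1⟩
    exact key _ (tendsto_atTop_ciInf anti hbdd)

/-- If `f : [0,1] → [0,1]` is continuous and some iterate `f^n` maps a closed
interval `I ⊆ [0,1]` homeomorphically into itself, then every point of `I`
has a periodic omega-limit set. -/
theorem omegaLimit_periodic_of_iterate_injOn_mapsTo
    (f : ℝ → ℝ) (hf : ContinuousOn f (Icc 0 1)) (hmaps : MapsTo f (Icc 0 1) (Icc 0 1))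
    (a b : ℝ) (hab : a ≤ b) (hI : Icc a b ⊆ Icc 0 1)
    (n : ℕ) (hn : 1 ≤ n)
    (hinj : InjOn (f^[n]) (Icc a b))
    (hmap : MapsTo (f^[n]) (Icc a b) (Icc a b)) :
    ∀ x ∈ Icc a b, IsPeriodicOrbitSet f (omegaLimitPt f x) := by
  intro x hx
  -- continuity of iterates on [0,1]
  have hcontIter : ∀ i : ℕ, ContinuousOn (f^[i]) (Icc 0 1) := fun i => hf.iterate hmaps i
  have hgc : ContinuousOn (f^[n]) (Icc a b) := (hcontIter n).mono hI
  -- find N ≥ 1 with f^[N] strictly monotone on [a,b] mapping into [a,b]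
  obtain ⟨N, hN1, hNmono, hNmap⟩ :
      ∃ N : ℕ, 1 ≤ N ∧ StrictMonoOn (f^[N]) (Icc a b) ∧
        MapsTo (f^[N]) (Icc a b) (Icc a b) := by
    rcases hgc.strictMonoOn_of_injOn_Icc' hab hinj with h | h
    · exact ⟨n, hn, h, hmap⟩
    · refine ⟨n + n, le_add_right hn, ?_, ?_⟩
      · intro u hu v hv huv
        rw [Function.iterate_add_apply, Function.iterate_add_apply]
        exact h (hmap hv) (hmap hu) (h hu hv huv)
      · intro u hu
        rw [Function.iterate_add_apply]
        exact hmap (hmap hu)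
  have hNpos : 0 < N := hN1
  have hNc : ContinuousOn (f^[N]) (Icc a b) := (hcontIter N).mono hI
  obtain ⟨p, hp, hfix, htend⟩ := orbit_tendsto_fixedPoint hNc hNmono hNmap hx
  have hp01 : p ∈ Icc 0 1 := hI hp
  have hx01 : x ∈ Icc 0 1 := hI hx
  have horb01 : ∀ m : ℕ, f^[m] x ∈ Icc 0 1 := fun m => hmaps.iterate m hx01
  -- f^[N*k] x → p
  have htend' : Tendsto (fun k => f^[N * k] x) atTop (nhds p) := by
    have : ∀ k, f^[N * k] x = (f^[N])^[k] x := fun k => by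
      rw [Function.iterate_mul]
    simpa [this] using htend
  -- for each i, f^[i + N*k] x → f^[i] p
  have hlim : ∀ i : ℕ, Tendsto (fun k => f^[i + N * k] x) atTop (nhds (f^[i] p)) := by
    intro i
    have h1 : Tendsto (fun k => f^[N * k] x) atTop (nhdsWithin p (Icc 0 1)) :=
      tendsto_nhdsWithin_of_tendsto_nhds_of_eventually_within _ htend'
        (.of_forall fun k => horb01 _)
    have h2 := ((hcontIter i).continuousWithinAt hp01).tendsto.comp h1
    simpa [Function.comp_def, Function.iterate_add_apply] using h2
  refine ⟨p, N, hNpos, hfix, ?_⟩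
  ext y
  simp only [omegaLimitPt, mem_setOf_eq]
  constructor
  · rintro ⟨φ, hφ, hφt⟩
    -- pick a residue class mod N hit infinitely often
    have : Finite (Fin N) := inferInstance
    obtain ⟨r, hr⟩ := Finite.exists_infinite_fiber
      (fun k => (⟨φ k % N, Nat.mod_lt _ hNpos⟩ : Fin N))
    have hinf : (setOf fun k => φ k % N = r.val).Infinite := by
      have hset : (setOf fun k => φ k % N = r.val) =
          (fun k => (⟨φ k % N, Nat.mod_lt _ hNpos⟩ : Fin N)) ⁻¹' {r} := by
        ext k
        simp [Fin.ext_iff]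
        exact Iff.rfl
      rw [hset]
      exact Set.infinite_coe_iff.mp hr
    set e : ℕ → ℕ := Nat.nth (fun k => φ k % N = r.val) with he
    have hemono : StrictMono e := Nat.nth_strictMono hinf
    have hemem : ∀ k, φ (e k) % N = r.val := fun k => Nat.nth_mem_of_infinite hinf k
    have hσmono : StrictMono fun k => φ (e k) := hφ.comp hemono
    -- q k → ∞
    set q : ℕ → ℕ := fun k => φ (e k) / N with hq
    have hqtop : Tendsto q atTop atTop := by
      rw [tendsto_atTop_atTop]
      intro c
      refine ⟨c * N, fun k hk => ?_⟩
      rw [hq, Nat.le_div_iff_mul_le hNpos]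
      exact le_trans hk (hσmono.le_apply)
    have hdecomp : ∀ k, φ (e k) = r.val + N * q k := fun k => by
      rw [hq, ← hemem k, Nat.mod_add_div]
    -- along the subsequence, the limit is f^[r] p
    have h1 : Tendsto (fun k => f^[φ (e k)] x) atTop (nhds (f^[r.val] p)) := by
      refine ((hlim r.val).comp hqtop).congr fun k => ?_
      simp only [Function.comp_apply]
      rw [hdecomp k]
    have h2 : Tendsto (fun k => f^[φ (e k)] x) atTop (nhds y) :=
      hφt.comp hemono.tendsto_atTop
    exact ⟨r.val, tendsto_nhds_unique h2 h1⟩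
  · rintro ⟨i, rfl⟩
    refine ⟨fun k => i + N * k, ?_, hlim i⟩
    exact fun u v huv => Nat.add_lt_add_left (mul_lt_mul_of_pos_left huv hNpos) i
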